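/- S-lemma: Let q_a, q_b : ℝⁿ → ℝ be quadratic functions (polynomials of degree at most 2) and suppose there exists x̄ with q_a(x̄) < 0. Then the implication [for all x, q_a(x) ≤ 0 ⟹ q_b(x) ≤ 0] holds if and only if there exists λ ≥ 0 such that λ q_a(x) − q_b(x) ≥ 0 for all x ∈ ℝⁿ. -/

import Mathlib

/-- Key 2D lemma: the point `m + σ•a` on the diameter of the ellipse
`{m + u•a + v•b : u²+v²=1}` lies on the cone over the ellipse. -/
lemma key2d (m1 m2 a1 a2 b1 b2 σ : ℝ) (hσ : σ^2 ≤ 1) :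
    ∃ c u v : ℝ, 0 ≤ c ∧ u^2 + v^2 = 1 ∧
      c*(m1 + u*a1 + v*b1) = m1 + σ*a1 ∧ c*(m2 + u*a2 + v*b2) = m2 + σ*a2 := by
  by_cases hdet : a1*b2 - a2*b1 = 0
  · -- a, b linearly dependent
    by_cases ha : a1 = 0 ∧ a2 = 0
    · exact ⟨1, 1, 0, zero_le_one, by ring, by rw [ha.1]; ring, by rw [ha.2]; ring⟩
    · -- b = κ • a
      obtain ⟨κ, hb1, hb2⟩ : ∃ κ : ℝ, b1 = κ*a1 ∧ b2 = κ*a2 := by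
        rcases eq_or_ne a1 0 with h1 | h1
        · have h2 : a2 ≠ 0 := fun h2 => ha ⟨h1, h2⟩
          refine ⟨b2/a2, ?_, by field_simp⟩
          have : a2 * b1 = 0 := by rw [h1] at hdet; linarith
          have : b1 = 0 := by
            rcases mul_eq_zero.1 this with h | h
            · exact absurd h h2
            · exact h
          rw [this, h1]; ring
        · refine ⟨b1/a1, by field_simp, ?_⟩
          field_simp
          nlinarith [hdet]
      have hDnn : (0:ℝ) ≤ 1 - σ^2 + κ^2 := by nlinarith
      set D := Real.sqrt (1 - σ^2 + κ^2) with hD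
      have hD2 : D^2 = 1 - σ^2 + κ^2 := Real.sq_sqrt hDnn
      have hden : (1:ℝ) + κ^2 ≠ 0 := by positivity
      set v := (σ*κ + D)/(1+κ^2) with hv
      set u := σ - κ*v with hu
      have huv : u^2 + v^2 = 1 := by
        rw [hu, hv]; field_simp; nlinarith [hD2]
      refine ⟨1, u, v, zero_le_one, huv, ?_, ?_⟩
      · rw [hb1, hu]; ring
      · rw [hb2, hu]; ring
  · -- a, b linearly independent
    set det := a1*b2 - a2*b1 with hdetdef
    set p := (m1*b2 - m2*b1)/det with hp
    set q := (a1*m2 - a2*m1)/det with hq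
    have hm1 : m1 = p*a1 + q*b1 := by rw [hp, hq]; field_simp; ring
    have hm2 : m2 = p*a2 + q*b2 := by rw [hp, hq]; field_simp; ring
    by_cases h0 : p + σ = 0 ∧ q = 0
    · refine ⟨0, 1, 0, le_refl _, by ring, ?_, ?_⟩
      · have : m1 + σ*a1 = (p+σ)*a1 + q*b1 := by rw [hm1]; ring
        rw [this, h0.1, h0.2]; ring
      · have : m2 + σ*a2 = (p+σ)*a2 + q*b2 := by rw [hm2]; ring
        rw [this, h0.1, h0.2]; ring
    · -- IVT
      set h : ℝ → ℝ := fun w => (w*(p+σ)-p)^2 + (q*(w-1))^2 with hh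
      have hcont : Continuous h := by fun_prop
      obtain ⟨W, hW1, hWval⟩ : ∃ W : ℝ, 1 ≤ W ∧ 1 ≤ h W := by
        rcases eq_or_ne (p + σ) 0 with hps | hps
        · have hq0 : q ≠ 0 := fun hc => h0 ⟨hps, hc⟩
          refine ⟨1 + 1/|q|, le_add_of_nonneg_right (by positivity), ?_⟩
          have hqa : |q| > 0 := abs_pos.2 hq0
          have : (q*((1 + 1/|q|)-1))^2 = 1 := by
            have : q*((1 + 1/|q|)-1) = q/|q| := by field_simp; ring
            rw [this]
            rcases abs_choice q with hc | hc <;> rw [hc] <;> field_simp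
          rw [hh]; simp only
          nlinarith [sq_nonneg ((1 + 1/|q|)*(p+σ)-p)]
        · have habs : |p + σ| > 0 := abs_pos.2 hps
          refine ⟨max 1 ((|p|+2)/|p+σ|), le_max_left _ _, ?_⟩
          set W := max 1 ((|p|+2)/|p+σ|) with hWdef
          have h1 : (|p|+2)/|p+σ| ≤ W := le_max_right _ _
          have h2 : |p|+2 ≤ W * |p+σ| := by
            rw [div_le_iff₀ habs] at h1; linarith
          have h3 : |W*(p+σ)| = W * |p+σ| := by
            rw [abs_mul, abs_of_nonneg (le_trans zero_le_one (le_max_left _ _))]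
          have h4 : |W*(p+σ) - p| ≥ 2 := by
            have := abs_sub_abs_le_abs_sub (W*(p+σ)) p
            have h5 := abs_sub_abs_le_abs_sub (W*(p+σ)) p
            calc |W*(p+σ) - p| ≥ |W*(p+σ)| - |p| := h5
              _ ≥ 2 := by rw [h3]; linarith
          rw [hh]; simp only
          nlinarith [sq_nonneg (q*(W-1)), sq_abs (W*(p+σ)-p)]
      have hmem : (1:ℝ) ∈ Set.Icc (h 1) (h W) := by
        constructor
        · rw [hh]; simp only; nlinarith
        · exact hWval
      obtain ⟨w, hwmem, hw⟩ := intermediate_value_Icc hW1 hcont.continuousOn hmem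
      have hw1 : 1 ≤ w := hwmem.1
      have hwpos : 0 < w := lt_of_lt_of_le zero_lt_one hw1
      refine ⟨1/w, w*(p+σ)-p, q*(w-1), by positivity, hw, ?_, ?_⟩
      · rw [hm1]; field_simp; ring
      · rw [hm2]; field_simp; ring
/-- Dines-type lemma: joint range of two quadratic forms is convex. -/
lemma dines {V : Type*} [AddCommGroup V] [Module ℝ V]
    (f g : V → ℝ) (Bf Bg : V → V → ℝ)
    (hf : ∀ (α β : ℝ) (x y : V), f (α•x + β•y) = α^2 * f x + β^2 * f y + 2*α*β*Bf x y)
    (hg : ∀ (α β : ℝ) (x y : V), g (α•x + β•y) = α^2 * g x + β^2 * g y + 2*α*β*Bg x y)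
    (x y : V) (t : ℝ) (ht0 : 0 ≤ t) (ht1 : t ≤ 1) :
    ∃ z : V, f z = (1-t)*f x + t*f y ∧ g z = (1-t)*g x + t*g y := by
  have hσ : (1-2*t)^2 ≤ 1 := by nlinarith
  obtain ⟨c, u, v, hc, huv, h1, h2⟩ :=
    key2d ((f x + f y)/2) ((g x + g y)/2) ((f x - f y)/2) ((g x - g y)/2)
      (Bf x y) (Bg x y) (1-2*t) hσ
  -- build cos/sin pair
  have hu1 : u^2 ≤ 1 := by nlinarith [sq_nonneg v]
  have hum : -1 ≤ u ∧ u ≤ 1 := abs_le.1 (abs_le_one_iff_mul_self_le_one.2 (by nlinarith))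
  obtain ⟨C, S, hC2, hS2, hCS⟩ : ∃ C S : ℝ, C^2 = (1+u)/2 ∧ S^2 = (1-u)/2 ∧ 2*C*S = v := by
    rcases eq_or_lt_of_le hum.1 with heq | hlt
    · have hv0 : v = 0 := by nlinarith
      exact ⟨0, 1, by rw [← heq]; ring, by rw [← heq]; ring, by rw [hv0]; ring⟩
    · have hCpos : (0:ℝ) < (1+u)/2 := by linarith
      set C := Real.sqrt ((1+u)/2) with hCdef
      have hC2 : C^2 = (1+u)/2 := Real.sq_sqrt hCpos.le
      have hCne : C ≠ 0 := by positivity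
      refine ⟨C, v/(2*C), hC2, ?_, by field_simp⟩
      have : (v/(2*C))^2 = v^2/(4*C^2) := by ring
      rw [this, hC2]
      have hv2 : v^2 = (1-u)*(1+u) := by nlinarith
      have h1u : (1+u) ≠ 0 := by linarith
      rw [hv2]; field_simp; ring
  set s := Real.sqrt c with hs
  have hs2 : s^2 = c := Real.sq_sqrt hc
  refine ⟨(s*C)•x + (s*S)•y, ?_, ?_⟩
  · have := hf (s*C) (s*S) x y
    rw [this]
    have : (s*C)^2 * f x + (s*S)^2 * f y + 2*(s*C)*(s*S)*Bf x y
        = c*((f x + f y)/2 + u*((f x - f y)/2) + v*(Bf x y)) := by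
      have e1 : (s*C)^2 = c*((1+u)/2) := by rw [mul_pow, hs2, hC2]
      have e2 : (s*S)^2 = c*((1-u)/2) := by rw [mul_pow, hs2, hS2]
      have e3 : 2*(s*C)*(s*S) = c*v := by
        have : 2*(s*C)*(s*S) = s^2*(2*C*S) := by ring
        rw [this, hs2, hCS]
      rw [e1, e2, e3]; ring
    rw [this, h1]; ring
  · have := hg (s*C) (s*S) x y
    rw [this]
    have : (s*C)^2 * g x + (s*S)^2 * g y + 2*(s*C)*(s*S)*Bg x y
        = c*((g x + g y)/2 + u*((g x - g y)/2) + v*(Bg x y)) := by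
      have e1 : (s*C)^2 = c*((1+u)/2) := by rw [mul_pow, hs2, hC2]
      have e2 : (s*S)^2 = c*((1-u)/2) := by rw [mul_pow, hs2, hS2]
      have e3 : 2*(s*C)*(s*S) = c*v := by
        have : 2*(s*C)*(s*S) = s^2*(2*C*S) := by ring
        rw [this, hs2, hCS]
      rw [e1, e2, e3]; ring
    rw [this, h2]; ring
/-- If a quadratic is eventually ≤ 0 forces another quadratic ≤ 0, leading coeff is ≤ 0. -/
lemma quad_coeff_le (A B C A2 B2 C2 : ℝ) (hA : A < 0)
    (h : ∀ s : ℝ, A*s^2 + B*s + C ≤ 0 → A2*s^2 + B2*s + C2 ≤ 0) : A2 ≤ 0 := by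
  by_contra hA2
  push_neg at hA2
  set s := max 1 (max ((|B|+|C|)/(-A)) ((|B2|+|C2|+1)/A2)) with hs
  have hs1 : 1 ≤ s := le_max_left _ _
  have hspos : 0 < s := lt_of_lt_of_le zero_lt_one hs1
  have hnA : 0 < -A := by linarith
  have hs2 : |B|+|C| ≤ (-A)*s := by
    have h1 : (|B|+|C|)/(-A) ≤ s := le_trans (le_max_left _ _) (le_max_right _ _)
    rw [div_le_iff₀ hnA] at h1; linarith
  have hs3 : |B2|+|C2|+1 ≤ A2*s := by
    have h1 : (|B2|+|C2|+1)/A2 ≤ s := le_trans (le_max_right _ _) (le_max_right _ _)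
    rw [div_le_iff₀ hA2] at h1; linarith
  have h1 : A*s^2 + B*s + C ≤ 0 := by
    nlinarith [le_abs_self B, le_abs_self C, abs_nonneg B, abs_nonneg C,
      mul_le_mul_of_nonneg_right hs2 hspos.le]
  have h2 := h s h1
  nlinarith [neg_abs_le B2, neg_abs_le C2, abs_nonneg B2, abs_nonneg C2,
    mul_le_mul_of_nonneg_right hs3 hspos.le]

theorem s_lemma (n : ℕ)
    (Pa Pb : Matrix (Fin n) (Fin n) ℝ) (hPa : Pa.IsSymm) (hPb : Pb.IsSymm)
    (ba bb : Fin n → ℝ) (ca cb : ℝ)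
    (qa qb : (Fin n → ℝ) → ℝ)
    (hqa : ∀ x, qa x = dotProduct x (Pa.mulVec x) + 2 * dotProduct ba x + ca)
    (hqb : ∀ x, qb x = dotProduct x (Pb.mulVec x) + 2 * dotProduct bb x + cb)
    (hslater : ∃ xbar, qa xbar < 0) :
    (∀ x, qa x ≤ 0 → qb x ≤ 0) ↔ ∃ l : ℝ, 0 ≤ l ∧ ∀ x, 0 ≤ l * qa x - qb x := by
  constructor
  · intro himp
    -- homogenized quadratic forms on (Fin n → ℝ) × ℝ
    set Qa : (Fin n → ℝ) × ℝ → ℝ := fun z =>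
      dotProduct z.1 (Pa.mulVec z.1) + 2*z.2*(dotProduct ba z.1) + ca*z.2^2 with hQa
    set Qb : (Fin n → ℝ) × ℝ → ℝ := fun z =>
      dotProduct z.1 (Pb.mulVec z.1) + 2*z.2*(dotProduct bb z.1) + cb*z.2^2 with hQb
    set Ba : ((Fin n → ℝ) × ℝ) → ((Fin n → ℝ) × ℝ) → ℝ := fun z w =>
      (dotProduct z.1 (Pa.mulVec w.1) + dotProduct w.1 (Pa.mulVec z.1))/2
        + z.2*(dotProduct ba w.1) + w.2*(dotProduct ba z.1) + ca*z.2*w.2 with hBa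
    set Bb : ((Fin n → ℝ) × ℝ) → ((Fin n → ℝ) × ℝ) → ℝ := fun z w =>
      (dotProduct z.1 (Pb.mulVec w.1) + dotProduct w.1 (Pb.mulVec z.1))/2
        + z.2*(dotProduct bb w.1) + w.2*(dotProduct bb z.1) + cb*z.2*w.2 with hBb
    have hfa : ∀ (α β : ℝ) (z w : (Fin n → ℝ) × ℝ),
        Qa (α•z + β•w) = α^2*Qa z + β^2*Qa w + 2*α*β*Ba z w := by
      intro α β z w
      simp only [hQa, hBa, Prod.fst_add, Prod.snd_add, Prod.smul_fst, Prod.smul_snd,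
        smul_eq_mul, Matrix.mulVec_add, Matrix.mulVec_smul, dotProduct_add,
        add_dotProduct, dotProduct_smul, smul_dotProduct]
      ring
    have hfb : ∀ (α β : ℝ) (z w : (Fin n → ℝ) × ℝ),
        Qb (α•z + β•w) = α^2*Qb z + β^2*Qb w + 2*α*β*Bb z w := by
      intro α β z w
      simp only [hQb, hBb, Prod.fst_add, Prod.snd_add, Prod.smul_fst, Prod.smul_snd,
        smul_eq_mul, Matrix.mulVec_add, Matrix.mulVec_smul, dotProduct_add,
        add_dotProduct, dotProduct_smul, smul_dotProduct]
      ring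
    have hhoma : ∀ (s : ℝ) (z : (Fin n → ℝ) × ℝ), Qa (s•z) = s^2 * Qa z := by
      intro s z
      have h := hfa s 0 z z
      rw [zero_smul, add_zero] at h
      rw [h]; ring
    have hhomb : ∀ (s : ℝ) (z : (Fin n → ℝ) × ℝ), Qb (s•z) = s^2 * Qb z := by
      intro s z
      have h := hfb s 0 z z
      rw [zero_smul, add_zero] at h
      rw [h]; ring
    set M : Set (ℝ×ℝ) := {p | ∃ z, p = (Qa z, Qb z)} with hM
    have hMconv : Convex ℝ M := by
      rintro p ⟨z1, rfl⟩ q ⟨z2, rfl⟩ a b ha hb hab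
      obtain ⟨z, hz1, hz2⟩ := dines Qa Qb Ba Bb hfa hfb z1 z2 b hb (by linarith)
      refine ⟨z, ?_⟩
      have ha' : a = 1 - b := by linarith
      rw [Prod.smul_mk, Prod.smul_mk, Prod.mk_add_mk, Prod.mk.injEq]
      constructor
      · rw [hz1, ha']; simp [smul_eq_mul]
      · rw [hz2, ha']; simp [smul_eq_mul]
    set Cs : Set (ℝ×ℝ) := Set.Iio (0:ℝ) ×ˢ Set.Ioi (0:ℝ) with hCs
    have hCopen : IsOpen Cs := isOpen_Iio.prod isOpen_Ioi
    have hCconv : Convex ℝ Cs := (convex_Iio _).prod (convex_Ioi _)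
    -- key disjointness
    have hdisj : Disjoint Cs M := by
      rw [Set.disjoint_left]
      rintro p hpC ⟨z, rfl⟩
      obtain ⟨hp1, hp2⟩ := hpC
      simp only [Set.mem_Iio, Set.mem_Ioi] at hp1 hp2
      obtain ⟨x, t⟩ := z
      have hQbz : Qb (x, t) ≤ 0 := by
        rcases eq_or_ne t 0 with rfl | ht
        · -- homogeneous part: limit argument
          have hAa : dotProduct x (Pa.mulVec x) < 0 := by
            have : Qa (x, 0) = dotProduct x (Pa.mulVec x) := by rw [hQa]; ring
            rwa [this] at hp1
          obtain ⟨xb, hxb⟩ := hslater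
          have ea : ∀ s : ℝ, qa (xb + s • x) =
              (dotProduct x (Pa.mulVec x))*s^2 +
              (dotProduct xb (Pa.mulVec x) + dotProduct x (Pa.mulVec xb)
                + 2*dotProduct ba x)*s + qa xb := by
            intro s
            rw [hqa, hqa]
            simp only [Matrix.mulVec_add, Matrix.mulVec_smul, dotProduct_add,
              add_dotProduct, dotProduct_smul, smul_dotProduct,
              smul_eq_mul]
            ring
          have eb : ∀ s : ℝ, qb (xb + s • x) =
              (dotProduct x (Pb.mulVec x))*s^2 +
              (dotProduct xb (Pb.mulVec x) + dotProduct x (Pb.mulVec xb)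
                + 2*dotProduct bb x)*s + qb xb := by
            intro s
            rw [hqb, hqb]
            simp only [Matrix.mulVec_add, Matrix.mulVec_smul, dotProduct_add,
              add_dotProduct, dotProduct_smul, smul_dotProduct,
              smul_eq_mul]
            ring
          have hA2 : dotProduct x (Pb.mulVec x) ≤ 0 := by
            refine quad_coeff_le (dotProduct x (Pa.mulVec x))
              (dotProduct xb (Pa.mulVec x) + dotProduct x (Pa.mulVec xb)
                + 2*dotProduct ba x) (qa xb)
              (dotProduct x (Pb.mulVec x))
              (dotProduct xb (Pb.mulVec x) + dotProduct x (Pb.mulVec xb)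
                + 2*dotProduct bb x) (qb xb) hAa ?_
            intro s hs
            rw [← eb s]
            exact himp _ (by rw [ea s]; exact hs)
          have : Qb (x, 0) = dotProduct x (Pb.mulVec x) := by rw [hQb]; ring
          rw [this]; exact hA2
        · -- t ≠ 0 : dehomogenize
          have e1 : Qa (x, t) = t^2 * qa (t⁻¹ • x) := by
            rw [hqa, hQa]
            simp only [Matrix.mulVec_smul, dotProduct_smul, smul_dotProduct,
              smul_eq_mul]
            field_simp
          have e2 : Qb (x, t) = t^2 * qb (t⁻¹ • x) := by
            rw [hqb, hQb]
            simp only [Matrix.mulVec_smul, dotProduct_smul, smul_dotProduct,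
              smul_eq_mul]
            field_simp
          have ht2 : 0 < t^2 := by positivity
          have hqaneg : qa (t⁻¹ • x) < 0 := by
            rw [e1] at hp1; nlinarith
          have := himp _ hqaneg.le
          rw [e2]; nlinarith
      exact absurd hp2 (not_lt.2 hQbz)
    -- separation
    obtain ⟨fL, u0, hfC, hfM⟩ := geometric_hahn_banach_open hCconv hCopen hMconv hdisj
    set α := fL (1,0) with hα'
    set β := fL (0,1) with hβ'
    have hflin : ∀ p : ℝ×ℝ, fL p = p.1*α + p.2*β := by
      intro p
      have hp : p = p.1 • ((1:ℝ),(0:ℝ)) + p.2 • ((0:ℝ),(1:ℝ)) := by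
        ext <;> simp
      calc fL p = fL (p.1 • ((1:ℝ),(0:ℝ)) + p.2 • ((0:ℝ),(1:ℝ))) := by rw [← hp]
        _ = p.1*α + p.2*β := by
            rw [map_add, map_smul, map_smul]; simp [smul_eq_mul]; rfl
    have h0M : ((0:ℝ),(0:ℝ)) ∈ M := by
      refine ⟨(0, 0), ?_⟩
      rw [hQa, hQb]
      simp
    have hu0 : u0 ≤ 0 := by
      have := hfM _ h0M
      rw [hflin] at this
      simpa using this
    -- f nonneg on M via cone property
    have hMnn : ∀ z, 0 ≤ α * Qa z + β * Qb z := by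
      intro z
      by_contra hneg
      push_neg at hneg
      set E := α * Qa z + β * Qb z with hE
      have hEneg : E < 0 := hneg
      set cc := (1 - u0)/(-E) with hcc
      have hccnn : 0 ≤ cc := by
        apply div_nonneg <;> linarith
      have hs := Real.sq_sqrt hccnn
      have hmem : ((Real.sqrt cc)^2 * Qa z, (Real.sqrt cc)^2 * Qb z) ∈ M := by
        refine ⟨Real.sqrt cc • z, ?_⟩
        rw [hhoma, hhomb]
      have := hfM _ hmem
      rw [hflin] at this
      simp only at this
      rw [hs] at this
      have hval : cc * Qa z * α + cc * Qb z * β = cc * E := by rw [hE]; ring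
      have hE0 : E ≠ 0 := ne_of_lt hEneg
      have hccE : cc * E = u0 - 1 := by
        rw [hcc, div_mul_eq_mul_div, div_eq_iff (neg_ne_zero.2 hE0)]; ring
      nlinarith [this, hval, hccE]
    have hCneg : ∀ p : ℝ×ℝ, p.1 < 0 → 0 < p.2 → p.1*α + p.2*β < 0 := by
      intro p h1 h2
      have hm : p ∈ Cs := ⟨h1, h2⟩
      have := hfC p hm
      rw [hflin] at this
      linarith
    have hαnn : 0 ≤ α := by
      by_contra h
      push_neg at h
      have hr : (0:ℝ) < (1+|β|)/(-α) := by
        apply div_pos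
        · have := abs_nonneg β; linarith
        · linarith
      have := hCneg (-((1+|β|)/(-α)), 1) (by linarith) one_pos
      have hα0 : α ≠ 0 := ne_of_lt h
      have hcomp : (-((1+|β|)/(-α))) * α = 1 + |β| := by
        rw [div_neg, neg_neg, div_mul_cancel₀ _ hα0]
      simp only at this
      rw [hcomp] at this
      nlinarith [neg_abs_le β]
    have hβnp : β ≤ 0 := by
      by_contra h
      push_neg at h
      have hr : (0:ℝ) < (1+|α|)/β := by
        apply div_pos
        · have := abs_nonneg α; linarith
        · exact h
      have := hCneg (-1, (1+|α|)/β) (by norm_num) hr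
      have hcomp : ((1+|α|)/β) * β = 1 + |α| := by
        field_simp
      simp only at this
      rw [hcomp] at this
      nlinarith [le_abs_self α]
    have hQax : ∀ x, Qa (x, 1) = qa x := by
      intro x; rw [hqa, hQa]; ring
    have hQbx : ∀ x, Qb (x, 1) = qb x := by
      intro x; rw [hqb, hQb]; ring
    have hβne : β ≠ 0 := by
      intro h0
      have hαpos : 0 < α := by
        have := hCneg (-1, 1) (by norm_num) one_pos
        rw [h0] at this
        simp only at this
        nlinarith
      obtain ⟨xb, hxb⟩ := hslater
      have := hMnn (xb, 1)
      rw [h0, hQax] at this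
      nlinarith
    have hβneg : β < 0 := lt_of_le_of_ne hβnp hβne
    refine ⟨α / (-β), div_nonneg hαnn (by linarith), ?_⟩
    intro x
    have h := hMnn (x, 1)
    rw [hQax, hQbx] at h
    have key : α/(-β) * qa x - qb x = (α * qa x + β * qb x)/(-β) := by
      have hnb : (-β) ≠ 0 := neg_ne_zero.2 hβne
      rw [eq_div_iff hnb, sub_mul, div_mul_eq_mul_div, div_mul_eq_mul_div, mul_div_assoc,
        div_self hnb, mul_one]
      ring
    rw [key]
    apply div_nonneg h (by linarith)
  · rintro ⟨l, hl, hlq⟩ x hx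
    have h := hlq x
    nlinarith [mul_nonneg hl (neg_nonneg.2 hx)]
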